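/- If the permutation (·) defined by F_{(i)} = E_i^c is decreasing, then μ_𝒜(x, α) = Σ_{i=0}^{κ-1} μ_{κ-1-i} · 1_{[A_i, A_{i+1})}(α) for every α ∈ [0,∞), with A_κ = +∞. -/
import Mathlib


open scoped Classical

/-- `𝒜` is a family of conditional aggregation operators (FCA) with respect to the
collection `𝓔`: every operator is nonnegative, monotone in the coordinates of the
conditioning set, vanishes on the indicator of the complement, and `𝒜(·|∅) = 0`. -/
def IsFCA (n : ℕ) (𝓔 : Finset (Finset (Fin n)))
    (𝒜 : Finset (Fin n) → (Fin n → ℝ) → ℝ) : Prop :=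
  (∀ E ∈ 𝓔, ∀ x : Fin n → ℝ, 0 ≤ 𝒜 E x) ∧
  (∀ E ∈ 𝓔, E ≠ ∅ → ∀ x y : Fin n → ℝ, (∀ i ∈ E, x i ≤ y i) → 𝒜 E x ≤ 𝒜 E y) ∧
  (∀ E ∈ 𝓔, E ≠ ∅ → 𝒜 E (fun i => if i ∈ E then 0 else 1) = 0) ∧
  (∀ x : Fin n → ℝ, 𝒜 ∅ x = 0)

/-- `μ` is a monotone measure on the complements of the sets of `𝓔`:
`μ ∅ = 0`, nonnegative, and monotone. -/
def IsMonMeasure (n : ℕ) (𝓔 : Finset (Finset (Fin n)))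
    (μ : Finset (Fin n) → ℝ) : Prop :=
  μ ∅ = 0 ∧ (∀ E ∈ 𝓔, 0 ≤ μ Eᶜ) ∧
  (∀ E ∈ 𝓔, ∀ F ∈ 𝓔, Eᶜ ⊆ Fᶜ → μ Eᶜ ≤ μ Fᶜ)

/-- The generalized survival function
`μ_𝒜(x, α) = min { μ(Eᶜ) : 𝒜(x|E) ≤ α, E ∈ 𝓔 }`. -/
noncomputable def gsf {n : ℕ} (𝓔 : Finset (Finset (Fin n)))
    (𝒜 : Finset (Fin n) → (Fin n → ℝ) → ℝ)
    (μ : Finset (Fin n) → ℝ) (x : Fin n → ℝ) (α : ℝ) : ℝ :=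
  sInf {m : ℝ | ∃ E ∈ 𝓔, 𝒜 E x ≤ α ∧ m = μ Eᶜ}

/-- Corollary: if the permutation `(·)` (with `F_{(i)} = E_iᶜ`) is decreasing,
i.e. `(i) = κ-1-i`, then
`μ_𝒜(x,α) = Σ_{i=0}^{κ-1} μ_{κ-1-i} · 1_{[A_i, A_{i+1})}(α)` with `A_κ = +∞`. -/
theorem stmt10 {n κ : ℕ} (𝓔 : Finset (Finset (Fin n)))
    (𝒜 : Finset (Fin n) → (Fin n → ℝ) → ℝ) (μ : Finset (Fin n) → ℝ)
    (x : Fin n → ℝ)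
    (hempty : ∅ ∈ 𝓔) (hU : (Finset.univ : Finset (Fin n)) ∈ 𝓔)
    (hA : IsFCA n 𝓔 𝒜) (hμ : IsMonMeasure n 𝓔 μ) (hx : ∀ i, 0 ≤ x i)
    (hκ : 𝓔.card = κ)
    (Estar : Fin κ → Finset (Fin n))
    (hmem : ∀ i, Estar i ∈ 𝓔) (hinj : Function.Injective Estar)
    (hAmono : ∀ i j : Fin κ, i ≤ j → 𝒜 (Estar i) x ≤ 𝒜 (Estar j) x)
    (Fstar : Fin κ → Finset (Fin n))
    (hFmem : ∀ j, (Fstar j)ᶜ ∈ 𝓔) (hFinj : Function.Injective Fstar)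
    (hμmono : ∀ i j : Fin κ, i ≤ j → μ (Fstar i) ≤ μ (Fstar j))
    (e : Fin κ ≃ Fin κ) (he : ∀ i, Fstar (e i) = (Estar i)ᶜ)
    (hdec : ∀ i : Fin κ, e i = Fin.rev i)
    (α : ℝ) (hα : 0 ≤ α) :
    gsf 𝓔 𝒜 μ x α =
      ∑ i : Fin κ,
        μ (Fstar (Fin.rev i)) *
          (if h : (i : ℕ) + 1 < κ then
            Set.indicator
              (Set.Ico (𝒜 (Estar i) x) (𝒜 (Estar ⟨(i : ℕ) + 1, h⟩) x))
              (fun _ => (1 : ℝ)) α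
          else
            Set.indicator (Set.Ici (𝒜 (Estar i) x)) (fun _ => (1 : ℝ)) α) := by
  classical
  have hκpos : 0 < κ := hκ ▸ Finset.card_pos.mpr ⟨∅, hempty⟩
  have himg : Finset.image Estar Finset.univ = 𝓔 := by
    apply Finset.eq_of_subset_of_card_le
    · intro E hE
      obtain ⟨j, _, rfl⟩ := Finset.mem_image.mp hE
      exact hmem j
    · rw [Finset.card_image_of_injective _ hinj, Finset.card_univ, Fintype.card_fin, hκ]
  have hsurj : ∀ E ∈ 𝓔, ∃ j, Estar j = E := by
    intro E hE
    rw [← himg] at hE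
    simpa using Finset.mem_image.mp hE
  obtain ⟨i0, hi0⟩ := hsurj ∅ hempty
  have hA0 : 𝒜 (Estar i0) x ≤ α := by rw [hi0, hA.2.2.2]; exact hα
  set s := Finset.univ.filter (fun j : Fin κ => 𝒜 (Estar j) x ≤ α) with hs
  have hsne : s.Nonempty := ⟨i0, by simp [hs, hA0]⟩
  set i := s.max' hsne with hidef
  have hiα : 𝒜 (Estar i) x ≤ α := by
    have := s.max'_mem hsne
    simp only [hs, Finset.mem_filter] at this
    exact this.2
  have hmax : ∀ j : Fin κ, 𝒜 (Estar j) x ≤ α → j ≤ i := fun j hj =>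
    s.le_max' j (by simp [hs, hj])
  have hgtα : ∀ j : Fin κ, i < j → α < 𝒜 (Estar j) x := by
    intro j hj
    by_contra h
    exact absurd (hmax j (le_of_not_gt h)) (not_le.mpr hj)
  have hμrev : ∀ j : Fin κ, μ ((Estar j)ᶜ) = μ (Fstar (Fin.rev j)) := fun j => by
    rw [← he j, hdec j]
  have hlb : ∀ m ∈ {m : ℝ | ∃ E ∈ 𝓔, 𝒜 E x ≤ α ∧ m = μ Eᶜ},
      μ (Fstar (Fin.rev i)) ≤ m := by
    rintro m ⟨E, hE, hAE, rfl⟩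
    obtain ⟨j, rfl⟩ := hsurj E hE
    rw [hμrev j]
    exact hμmono _ _ (Fin.rev_le_rev.mpr (hmax j hAE))
  have hmem' : μ (Fstar (Fin.rev i)) ∈ {m : ℝ | ∃ E ∈ 𝓔, 𝒜 E x ≤ α ∧ m = μ Eᶜ} :=
    ⟨Estar i, hmem i, hiα, (hμrev i).symm⟩
  have hL : gsf 𝓔 𝒜 μ x α = μ (Fstar (Fin.rev i)) := by
    unfold gsf
    exact le_antisymm (csInf_le ⟨_, hlb⟩ hmem') (le_csInf ⟨_, hmem'⟩ hlb)
  rw [hL, Finset.sum_eq_single i]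
  · split_ifs with h
    · rw [Set.indicator_of_mem, mul_one]
      exact ⟨hiα, hgtα ⟨(i : ℕ) + 1, h⟩ (by simp [Fin.lt_def])⟩
    · rw [Set.indicator_of_mem (Set.mem_Ici.mpr hiα), mul_one]
  · intro j _ hj
    rcases lt_or_gt_of_ne hj with hlt | hgt'
    · have hlt' : (j : ℕ) < (i : ℕ) := hlt
      have hj1 : (j : ℕ) + 1 < κ := lt_of_le_of_lt (Nat.succ_le_of_lt hlt') i.isLt
      rw [dif_pos hj1, Set.indicator_of_notMem, mul_zero]
      intro hm
      have : 𝒜 (Estar ⟨(j : ℕ) + 1, hj1⟩) x ≤ α :=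
        le_trans (hAmono _ i (by exact Nat.succ_le_of_lt hlt')) hiα
      exact absurd hm.2 (not_lt.mpr this)
    · have hja := hgtα j hgt'
      split_ifs with h
      · rw [Set.indicator_of_notMem, mul_zero]
        exact fun hm => absurd hm.1 (not_le.mpr hja)
      · rw [Set.indicator_of_notMem, mul_zero]
        exact fun hm => absurd (Set.mem_Ici.mp hm) (not_le.mpr hja)
  · intro h
    exact absurd (Finset.mem_univ i) h
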